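/- Let S be a real symmetric n×n matrix with largest eigenvalue ζ₁ and corresponding unit eigenvector ν₁. Then P = max(ζ₁, 0)·ν₁ν₁ᵀ minimizes ‖P − S‖_F² over all positive semidefinite matrices P with rank(P) ≤ 1. -/

import Mathlib

open Matrix

/-- Squared Frobenius norm. -/
noncomputable def frobSq {n : ℕ} (A : Matrix (Fin n) (Fin n) ℝ) : ℝ :=
  ∑ i, ∑ j, (A i j) ^ 2

/-- Frobenius inner product helper. -/
noncomputable def fipAux {n : ℕ} (A B : Matrix (Fin n) (Fin n) ℝ) : ℝ :=
  ∑ i, ∑ j, A i j * B i j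

lemma frobSq_sub_aux {n : ℕ} (A B : Matrix (Fin n) (Fin n) ℝ) :
    frobSq (A - B) = frobSq A - 2 * fipAux A B + frobSq B := by
  simp only [frobSq, fipAux, Matrix.sub_apply, sub_sq, Finset.mul_sum, ← Finset.sum_add_distrib,
    ← Finset.sum_sub_distrib]
  apply Finset.sum_congr rfl; intros; apply Finset.sum_congr rfl; intros; ring

lemma frobSq_outer_aux {n : ℕ} (σ : ℝ) (w : Fin n → ℝ) :
    frobSq (σ • vecMulVec w w) = σ ^ 2 * (∑ i, w i ^ 2) ^ 2 := by
  simp only [frobSq, Matrix.smul_apply, vecMulVec_apply, smul_eq_mul, mul_pow,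
    ← Finset.mul_sum, ← Finset.sum_mul]
  ring

lemma fip_outer_aux {n : ℕ} (σ : ℝ) (w : Fin n → ℝ) (S : Matrix (Fin n) (Fin n) ℝ) :
    fipAux (σ • vecMulVec w w) S = σ * (w ⬝ᵥ S.mulVec w) := by
  simp only [fipAux, Matrix.smul_apply, vecMulVec_apply, smul_eq_mul, dotProduct, mulVec,
    Finset.mul_sum]
  congr 1; ext i; congr 1; ext j; ring

lemma rayleigh_aux {n : ℕ} (S : Matrix (Fin n) (Fin n) ℝ) (hS : S.IsSymm) (ζ₁ : ℝ)
    (hmax : ∀ (ζ : ℝ) (v : Fin n → ℝ), v ≠ 0 → S.mulVec v = ζ • v → ζ ≤ ζ₁)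
    (v : Fin n → ℝ) : v ⬝ᵥ S.mulVec v ≤ ζ₁ * ∑ i, v i ^ 2 := by
  have hH : S.IsHermitian := by
    rw [Matrix.IsHermitian, conjTranspose_eq_transpose_of_trivial]; exact hS
  set b := hH.eigenvectorBasis with hb
  set μ := hH.eigenvalues with hμ
  have hmu : ∀ i, μ i ≤ ζ₁ := by
    intro i
    refine hmax (μ i) (b i) ?_ (hH.mulVec_eigenvectorBasis i)
    intro h0
    have h1 : ‖b i‖ = 1 := b.orthonormal.1 i
    rw [show b i = (0 : EuclideanSpace ℝ (Fin n)) by ext j; simpa using congrFun h0 j] at h1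
    simp at h1
  have key : ∀ x y : EuclideanSpace ℝ (Fin n), (inner ℝ x y : ℝ) = ∑ i, x i * y i := by
    intro x y
    simp [PiLp.inner_apply, RCLike.inner_apply, conj_trivial, mul_comm]
  set v' : EuclideanSpace ℝ (Fin n) := WithLp.toLp 2 v with hv'
  set Sv : EuclideanSpace ℝ (Fin n) := WithLp.toLp 2 (S.mulVec v) with hSv
  have h2 : ∀ i : Fin n, (inner ℝ (b i) Sv : ℝ) = μ i * inner ℝ (b i) v' := by
    intro i
    rw [key, key]
    have : ∑ j, b i j * Sv j = (⇑(b i)) ⬝ᵥ (S.mulVec v) := rfl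
    rw [this, dotProduct_mulVec, ← mulVec_transpose, hS, hH.mulVec_eigenvectorBasis i]
    simp [dotProduct, Finset.mul_sum, mul_comm, mul_assoc, mul_left_comm, hv', hμ, hb]
  have h3 : (inner ℝ v' Sv : ℝ) = ∑ i, μ i * (inner ℝ (b i) v' : ℝ) ^ 2 := by
    rw [← b.sum_inner_mul_inner v' Sv]
    apply Finset.sum_congr rfl
    intro i _
    rw [h2 i, real_inner_comm v' (b i)]
    ring
  have h4 : (inner ℝ v' v' : ℝ) = ∑ i, (inner ℝ (b i) v' : ℝ) ^ 2 := by
    rw [← b.sum_inner_mul_inner v' v']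
    apply Finset.sum_congr rfl
    intro i _
    rw [real_inner_comm v' (b i)]
    ring
  have h5 : v ⬝ᵥ S.mulVec v = (inner ℝ v' Sv : ℝ) := by
    rw [key]; rfl
  have h6 : (∑ i, v i ^ 2) = (inner ℝ v' v' : ℝ) := by
    rw [key]; apply Finset.sum_congr rfl; intros; ring
  rw [h5, h6, h3, h4, Finset.mul_sum]
  apply Finset.sum_le_sum
  intro i _
  exact mul_le_mul_of_nonneg_right (hmu i) (sq_nonneg _)

lemma psd_rank_one_aux {n : ℕ} (P : Matrix (Fin n) (Fin n) ℝ) (hP : P.PosSemidef)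
    (hr : P.rank ≤ 1) :
    P = 0 ∨ ∃ σ : ℝ, 0 ≤ σ ∧ ∃ w : Fin n → ℝ, (∑ i, w i ^ 2 = 1) ∧ P = σ • vecMulVec w w := by
  have hH := hP.1
  set μ := hH.eigenvalues with hμ
  set b := hH.eigenvectorBasis with hb
  have hcard : Fintype.card {i // μ i ≠ 0} ≤ 1 := by
    rw [← hH.rank_eq_card_non_zero_eigs]; exact hr
  have hPjk : ∀ j k, P j k = ∑ i, μ i * (b i j * b i k) := by
    intro j k
    conv_lhs => rw [hH.spectral_theorem]
    simp [Matrix.mul_apply, Matrix.mul_diagonal, Matrix.diagonal_apply, Finset.sum_mul,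
      Matrix.conjTranspose_apply, IsHermitian.eigenvectorUnitary_apply, mul_comm, mul_assoc,
      mul_left_comm]
    rfl
  by_cases hz : ∀ i, μ i = 0
  · left; ext j k; rw [hPjk]; simp [hz]
  · right
    push_neg at hz
    obtain ⟨i₀, hi₀⟩ := hz
    have huniq : ∀ i, i ≠ i₀ → μ i = 0 := by
      intro i hi
      by_contra h
      have := Fintype.card_le_one_iff.mp hcard ⟨i, h⟩ ⟨i₀, hi₀⟩
      exact hi (congrArg Subtype.val this)
    refine ⟨μ i₀, hP.eigenvalues_nonneg i₀, ⇑(b i₀), ?_, ?_⟩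
    · have h1 : ‖b i₀‖ = 1 := b.orthonormal.1 i₀
      have h2 : (inner ℝ (b i₀) (b i₀) : ℝ) = 1 := by
        rw [real_inner_self_eq_norm_sq, h1]; norm_num
      rw [← h2]
      simp only [PiLp.inner_apply, RCLike.inner_apply, conj_trivial, sq, mul_comm]
    · ext j k
      rw [hPjk, Finset.sum_eq_single i₀]
      · simp [vecMulVec_apply]
      · intro i _ hi; rw [huniq i hi]; ring
      · intro h; exact absurd (Finset.mem_univ i₀) h

theorem stmt0 {n : ℕ} (S : Matrix (Fin n) (Fin n) ℝ) (hS : S.IsSymm)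
    (ζ₁ : ℝ) (ν₁ : Fin n → ℝ)
    (hunit : ∑ i, (ν₁ i) ^ 2 = 1)
    (heig : S.mulVec ν₁ = ζ₁ • ν₁)
    (hmax : ∀ (ζ : ℝ) (v : Fin n → ℝ), v ≠ 0 → S.mulVec v = ζ • v → ζ ≤ ζ₁) :
    ∀ P : Matrix (Fin n) (Fin n) ℝ, P.PosSemidef → P.rank ≤ 1 →
      frobSq (max ζ₁ 0 • vecMulVec ν₁ ν₁ - S) ≤ frobSq (P - S) := by
  have hq : ν₁ ⬝ᵥ S.mulVec ν₁ = ζ₁ := by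
    rw [heig]
    simp only [dotProduct, Pi.smul_apply, smul_eq_mul]
    rw [show ∑ i, ν₁ i * (ζ₁ * ν₁ i) = ζ₁ * ∑ i, ν₁ i ^ 2 by
      rw [Finset.mul_sum]; apply Finset.sum_congr rfl; intros; ring, hunit, mul_one]
  have key : ∀ (σ : ℝ) (w : Fin n → ℝ), 0 ≤ σ → (∑ i, w i ^ 2 = 1) →
      frobSq (max ζ₁ 0 • vecMulVec ν₁ ν₁ - S) ≤ frobSq (σ • vecMulVec w w - S) := by
    intro σ w hσ hw
    have hqw : w ⬝ᵥ S.mulVec w ≤ ζ₁ := by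
      have := rayleigh_aux S hS ζ₁ hmax w
      rwa [hw, mul_one] at this
    rw [frobSq_sub_aux, frobSq_sub_aux, frobSq_outer_aux, frobSq_outer_aux, fip_outer_aux,
      fip_outer_aux, hunit, hw, hq]
    have h1 : σ * (w ⬝ᵥ S.mulVec w) ≤ σ * ζ₁ := mul_le_mul_of_nonneg_left hqw hσ
    rcases le_total ζ₁ 0 with h | h
    · rw [max_eq_right h]
      nlinarith [sq_nonneg σ]
    · rw [max_eq_left h]
      nlinarith [sq_nonneg (σ - ζ₁)]
  intro P hPsd hr
  rcases psd_rank_one_aux P hPsd hr with h0 | ⟨σ, hσ, w, hw, hPw⟩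
  · have : P = (0 : ℝ) • vecMulVec ν₁ ν₁ := by rw [h0]; simp
    rw [this]
    exact key 0 ν₁ le_rfl hunit
  · rw [hPw]
    exact key σ w hσ hw
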